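/- arXiv:2007.08726 — 3 statements merged into one kernel-verified Lean document; each statement's English description precedes it below -/
import Mathlib

section
/- In a metric transportation game with n players, for any outcome σ and any outcome σ* minimizing the utilitarian social cost U, it holds that U(σ) ≤ (2n−1)·U(σ*). -/
open Finset

/-- Length of a bus route that visits the points of `l` in order and then ends at the
destination `t` (the initial segment from the depot is ignored). -/
noncomputable def routeLen {V : Type*} [PseudoMetricSpace V] (t : V) (l : List V) : ℝ :=
  ∑ i ∈ Finset.range l.length, dist (l.getD i t) (l.getD (i + 1) t)

/-- The route of bus `j` under outcome `σ`: the players that chose bus `j`, in the order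
given by the fixed permutation list `ord j` of bus `j`. -/
def busRoute {n m : ℕ} (ord : Fin m → List (Fin n)) (σ : Fin n → Fin m) (j : Fin m) :
    List (Fin n) :=
  (ord j).filter (fun i => decide (σ i = j))

/-- `ord` gives, for every bus, a permutation of all the players. -/
def validOrd {n m : ℕ} (ord : Fin m → List (Fin n)) : Prop :=
  ∀ j : Fin m, (ord j).Nodup ∧ ∀ i : Fin n, i ∈ ord j

/-- The cost of player `i` under outcome `σ`: the distance traveled by `i`'s bus from the
location of `i` to the destination `t`. -/
noncomputable def playerCost {V : Type*} [PseudoMetricSpace V] {n m : ℕ}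
    (x : Fin n → V) (t : V) (ord : Fin m → List (Fin n)) (σ : Fin n → Fin m)
    (i : Fin n) : ℝ :=
  routeLen t
    (((busRoute ord σ (σ i)).drop ((busRoute ord σ (σ i)).idxOf i)).map x)

/-- The utilitarian social cost: the sum of the costs of all players. -/
noncomputable def socialU {V : Type*} [PseudoMetricSpace V] {n m : ℕ}
    (x : Fin n → V) (t : V) (ord : Fin m → List (Fin n)) (σ : Fin n → Fin m) : ℝ :=
  ∑ i : Fin n, playerCost x t ord σ i

/-- The egalitarian social cost: the largest cost of a player. -/
noncomputable def socialE {V : Type*} [PseudoMetricSpace V] {n m : ℕ}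
    (x : Fin n → V) (t : V) (ord : Fin m → List (Fin n)) (σ : Fin n → Fin m) : ℝ :=
  ⨆ i : Fin n, playerCost x t ord σ i

/-- `σ` is a (pure) Nash equilibrium: no player can decrease her cost by unilaterally
switching to another bus. -/
def isNash {V : Type*} [PseudoMetricSpace V] {n m : ℕ}
    (x : Fin n → V) (t : V) (ord : Fin m → List (Fin n)) (σ : Fin n → Fin m) : Prop :=
  ∀ i : Fin n, ∀ j : Fin m,
    playerCost x t ord σ i ≤ playerCost x t ord (Function.update σ i j) i



lemma routeLen_cons' {V : Type*} [PseudoMetricSpace V] (t a : V) (l : List V) :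
    routeLen t (a :: l) = dist a (l.getD 0 t) + routeLen t l := by
  simp only [routeLen, List.length_cons, Finset.sum_range_succ']
  rw [add_comm]
  refine congrArg₂ (·+·) ?_ (Finset.sum_congr rfl fun i _ => ?_)
  · simp
  · simp only [List.getD_cons_succ]

lemma dist_le_routeLen' {V : Type*} [PseudoMetricSpace V] (t : V) (l : List V) :
    dist (l.getD 0 t) t ≤ routeLen t l := by
  induction l with
  | nil => simp [routeLen]
  | cons a l ih =>
    rw [routeLen_cons']
    calc dist ((a::l).getD 0 t) t = dist a t := by simp
    _ ≤ dist a (l.getD 0 t) + dist (l.getD 0 t) t := dist_triangle _ _ _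
    _ ≤ dist a (l.getD 0 t) + routeLen t l := by linarith

lemma routeLen_le' {V : Type*} [PseudoMetricSpace V] (t : V) (l : List V) :
    routeLen t l ≤ 2 * (l.map (fun p => dist p t)).sum - dist (l.getD 0 t) t := by
  induction l with
  | nil => simp [routeLen]
  | cons a l ih =>
    rw [routeLen_cons']
    have h := dist_triangle a t (l.getD 0 t)
    have ha : ((a::l).getD 0 t) = a := by simp
    rw [ha]
    simp only [List.map_cons, List.sum_cons]
    rw [dist_comm t] at h
    linarith

lemma busRoute_drop_eq {n m : ℕ} (ord : Fin m → List (Fin n)) (hord : validOrd ord)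
    (σ : Fin n → Fin m) (i : Fin n) :
    (busRoute ord σ (σ i)).drop ((busRoute ord σ (σ i)).idxOf i)
      = i :: (busRoute ord σ (σ i)).drop ((busRoute ord σ (σ i)).idxOf i + 1) := by
  have hm : i ∈ busRoute ord σ (σ i) := by
    simp [busRoute, List.mem_filter, (hord (σ i)).2 i]
  have hk : (busRoute ord σ (σ i)).idxOf i < (busRoute ord σ (σ i)).length :=
    List.idxOf_lt_length_iff.2 hm
  rw [List.drop_eq_getElem_cons hk, List.getElem_idxOf]

lemma dist_le_playerCost {V : Type*} [MetricSpace V] {n m : ℕ}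
    (x : Fin n → V) (t : V) (ord : Fin m → List (Fin n)) (hord : validOrd ord)
    (σ : Fin n → Fin m) (i : Fin n) :
    dist (x i) t ≤ playerCost x t ord σ i := by
  rw [playerCost, busRoute_drop_eq ord hord σ i, List.map_cons]
  have := dist_le_routeLen' t
    (x i :: ((busRoute ord σ (σ i)).drop ((busRoute ord σ (σ i)).idxOf i + 1)).map x)
  simpa using this

lemma busRoute_toFinset {n m : ℕ} (ord : Fin m → List (Fin n)) (hord : validOrd ord)
    (σ : Fin n → Fin m) (j : Fin m) :
    (busRoute ord σ j).toFinset = Finset.univ.filter (fun q => σ q = j) := by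
  ext q
  simp [busRoute, List.mem_filter, (hord j).2 q]

lemma playerCost_le {V : Type*} [MetricSpace V] {n m : ℕ}
    (x : Fin n → V) (t : V) (ord : Fin m → List (Fin n)) (hord : validOrd ord)
    (σ : Fin n → Fin m) (i : Fin n) :
    playerCost x t ord σ i ≤
      2 * (∑ q ∈ Finset.univ.filter (fun q => σ q = σ i), dist (x q) t) - dist (x i) t := by
  set l := busRoute ord σ (σ i) with hl
  set k := l.idxOf i with hk
  have hnodup : l.Nodup := List.Nodup.filter _ (hord (σ i)).1
  have hdrop : l.drop k = i :: l.drop (k+1) := busRoute_drop_eq ord hord σ i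
  have h1 : playerCost x t ord σ i ≤
      2 * (((l.drop k).map x).map (fun p => dist p t)).sum - dist (x i) t := by
    have := routeLen_le' t ((l.drop k).map x)
    rw [playerCost]
    calc routeLen t ((l.drop k).map x)
        ≤ 2 * (((l.drop k).map x).map (fun p => dist p t)).sum
            - dist (((l.drop k).map x).getD 0 t) t := this
      _ = 2 * (((l.drop k).map x).map (fun p => dist p t)).sum - dist (x i) t := by
          rw [hdrop]; simp
  refine h1.trans ?_
  have h2 : (((l.drop k).map x).map (fun p => dist p t)).sum ≤
      ∑ q ∈ Finset.univ.filter (fun q => σ q = σ i), dist (x q) t := by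
    rw [List.map_map]
    have hsub : List.Sublist ((l.drop k).map (fun q => dist (x q) t))
        (l.map (fun q => dist (x q) t)) := (List.drop_sublist k l).map _
    have h3 : ((l.drop k).map (fun q => dist (x q) t)).sum ≤
        (l.map (fun q => dist (x q) t)).sum := by
      refine List.Sublist.sum_le_sum hsub ?_
      intro a ha
      rcases List.mem_map.1 ha with ⟨q, _, rfl⟩
      exact dist_nonneg
    have h4 : (l.map (fun q => dist (x q) t)).sum
        = ∑ q ∈ Finset.univ.filter (fun q => σ q = σ i), dist (x q) t := by
      rw [← busRoute_toFinset ord hord σ (σ i), ← hl]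
      exact (List.sum_toFinset _ hnodup).symm
    calc ((l.drop k).map (fun q => dist (x q) t)).sum
        ≤ (l.map (fun q => dist (x q) t)).sum := h3
      _ = _ := h4
  linarith


/-- in a metric transportation game with `n` players, for any outcome `σ` and
any outcome `σ*` minimizing the utilitarian social cost `U`, `U(σ) ≤ (2n-1)·U(σ*)`. -/
theorem stmt2 {V : Type*} [MetricSpace V] {n m : ℕ}
    (x : Fin n → V) (t : V) (ord : Fin m → List (Fin n)) (hord : validOrd ord)
    (σ σstar : Fin n → Fin m)
    (hopt : ∀ σ' : Fin n → Fin m, socialU x t ord σstar ≤ socialU x t ord σ') :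
    socialU x t ord σ ≤ (2 * (n : ℝ) - 1) * socialU x t ord σstar := by

  classical
  set D : ℝ := ∑ i : Fin n, dist (x i) t with hD
  have hDopt : D ≤ socialU x t ord σstar :=
    Finset.sum_le_sum fun i _ => dist_le_playerCost x t ord hord σstar i
  have hup : socialU x t ord σ ≤ (2 * (n:ℝ) - 1) * D := by
    have h1 : ∀ i : Fin n, playerCost x t ord σ i ≤ 2 * D - dist (x i) t := by
      intro i
      refine (playerCost_le x t ord hord σ i).trans ?_
      have : (∑ q ∈ Finset.univ.filter (fun q => σ q = σ i), dist (x q) t) ≤ D :=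
        Finset.sum_le_sum_of_subset_of_nonneg (Finset.filter_subset _ _)
          (fun q _ _ => dist_nonneg)
      linarith
    calc socialU x t ord σ ≤ ∑ i : Fin n, (2 * D - dist (x i) t) :=
          Finset.sum_le_sum fun i _ => h1 i
      _ = (n : ℝ) * (2 * D) - D := by
          rw [Finset.sum_sub_distrib, Finset.sum_const, ← hD]
          simp [mul_comm]
      _ = (2 * (n:ℝ) - 1) * D := by ring
  rcases Nat.eq_zero_or_pos n with h0 | hpos
  · have hD0 : D = 0 := by subst h0; simp [hD]
    have hU0 : socialU x t ord σstar = 0 := by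
      subst h0; simp [socialU]
    rw [hU0, mul_zero]
    calc socialU x t ord σ ≤ (2 * (n:ℝ) - 1) * D := hup
      _ = 0 := by rw [hD0, mul_zero]
  · have hc : (0:ℝ) ≤ 2 * (n:ℝ) - 1 := by
      have : (1:ℝ) ≤ (n:ℝ) := by exact_mod_cast hpos
      linarith
    calc socialU x t ord σ ≤ (2 * (n:ℝ) - 1) * D := hup
      _ ≤ (2 * (n:ℝ) - 1) * socialU x t ord σstar :=
          mul_le_mul_of_nonneg_left hDopt hc
end

section
/- In the metric transportation instance where players L ∪ R are split into k levels per side and every bus's route in the equilibrium outcome alternates between one L-player and one R-player at each of k levels before reaching t, the route length of each bus equals (2k−1)(a² + a) + a², where d(L-player, R-player) = a(a+1), d(R-player, t) = a, d(L-player, t) = a². Hence the egalitarian cost of this outcome is (2k−1)(a²+a) + a², and the ratio of this to the optimal egalitarian cost a² + 2k − 1 tends to 2k as a → ∞. -/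
open Finset

/-- an equilibrium bus route alternating between an `L`-player and an
`R`-player at each of the `k` levels (so `2k` players, consecutive distances `a(a+1)`,
last player at distance `a²` from `t`) has length `(2k-1)(a²+a) + a²`; hence the
egalitarian cost of this outcome is `(2k-1)(a²+a) + a²` and its ratio to the optimal
egalitarian cost `a² + 2k - 1` tends to `2k` as `a → ∞`. -/
theorem stmt8 {V : Type*} [MetricSpace V] (t : V) (k : ℕ) (hk : 1 ≤ k) (a : ℝ) (ha : 1 ≤ a)
    (l : List V) (hlen : l.length = 2 * k)
    (hedge : ∀ i : ℕ, i + 1 < 2 * k → dist (l.getD i t) (l.getD (i + 1) t) = a * (a + 1))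
    (hlast : dist (l.getD (2 * k - 1) t) t = a ^ 2) :
    routeLen t l = (2 * (k : ℝ) - 1) * (a ^ 2 + a) + a ^ 2 ∧
    Filter.Tendsto
      (fun b : ℝ => ((2 * (k : ℝ) - 1) * (b ^ 2 + b) + b ^ 2) / (b ^ 2 + 2 * (k : ℝ) - 1))
      Filter.atTop (nhds (2 * (k : ℝ))) := by
  constructor
  · have h2k : 2 * k = (2 * k - 1) + 1 := by omega
    unfold routeLen
    rw [hlen, h2k, Finset.sum_range_succ]
    have hlastD : l.getD (2 * k - 1 + 1) t = t := by
      apply List.getD_eq_default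
      omega
    rw [← h2k] at hlastD
    have hsum : ∑ i ∈ Finset.range (2 * k - 1), dist (l.getD i t) (l.getD (i + 1) t)
        = (2 * k - 1 : ℕ) * (a * (a + 1)) := by
      rw [Finset.sum_congr rfl (fun i hi => hedge i (by
        simp only [Finset.mem_range] at hi; omega))]
      rw [Finset.sum_const, Finset.card_range, nsmul_eq_mul]
    rw [hsum, ← h2k, hlastD, hlast]
    have : ((2 * k - 1 : ℕ) : ℝ) = 2 * (k : ℝ) - 1 := by
      have : (1 : ℕ) ≤ 2 * k := by omega
      push_cast [this]
      ring
    rw [this]; ring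
  · have hc : (0:ℝ) < 2 * (k : ℝ) - 1 := by
      have : (1:ℝ) ≤ (k : ℝ) := by exact_mod_cast hk
      linarith
    have hinv : Filter.Tendsto (fun b : ℝ => b⁻¹) Filter.atTop (nhds 0) :=
      tendsto_inv_atTop_zero
    have hnum : Filter.Tendsto
        (fun b : ℝ => (2 * (k : ℝ) - 1) * (1 + b⁻¹) + 1) Filter.atTop
        (nhds (2 * (k : ℝ))) := by
      have : Filter.Tendsto (fun b : ℝ => (2 * (k : ℝ) - 1) * (1 + b⁻¹) + 1)
          Filter.atTop (nhds ((2 * (k : ℝ) - 1) * (1 + 0) + 1)) := by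
        exact (((tendsto_const_nhds.add hinv).const_mul _).add tendsto_const_nhds)
      simpa using this
    have hden : Filter.Tendsto
        (fun b : ℝ => 1 + (2 * (k : ℝ) - 1) * (b⁻¹ * b⁻¹)) Filter.atTop (nhds 1) := by
      have : Filter.Tendsto (fun b : ℝ => 1 + (2 * (k : ℝ) - 1) * (b⁻¹ * b⁻¹))
          Filter.atTop (nhds (1 + (2 * (k : ℝ) - 1) * (0 * 0))) :=
        tendsto_const_nhds.add (((hinv.mul hinv)).const_mul _)
      simpa using this
    have hlim : Filter.Tendsto
        (fun b : ℝ => ((2 * (k : ℝ) - 1) * (1 + b⁻¹) + 1) /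
          (1 + (2 * (k : ℝ) - 1) * (b⁻¹ * b⁻¹))) Filter.atTop (nhds (2 * (k : ℝ))) := by
      have := hnum.div hden (by norm_num)
      rw [div_one] at this
      exact this
    apply hlim.congr'
    filter_upwards [Filter.eventually_ge_atTop (1:ℝ)] with b hb
    have hb0 : b ≠ 0 := by linarith
    have hden0 : b ^ 2 + 2 * (k : ℝ) - 1 ≠ 0 := by nlinarith
    field_simp
    ring
end

section
/- Consider the instance with n players and m buses where d(u,t) = d(u,v) = 0 for u,v ∈ {1,…,n−m}, and d(u,t) = 1, d(u,v) = ε for distinct u,v ∈ {n−m+1,…,n} (with cross distances induced as shortest paths). The outcome σ* placing players n−m+1,…,n all on one bus and the rest on another has U(σ*) = m + (m(m−1)/2)·ε, while the outcome σ placing each of players n−m+1,…,n on a distinct bus (each alone among the last m players) and the first n−m players paying 2 each has U(σ) = m + 2(n−m) = 2n − m. The ratio (2n−m)/(m + (m(m−1)/2)ε) tends to 2n/m − 1 as ε → 0. -/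
open Finset

lemma getD_drop' {V : Type*} (l : List V) (i j : ℕ) (t : V) :
    (l.drop i).getD j t = l.getD (i + j) t := by
  simp [List.getD_eq_getElem?_getD, List.getElem?_drop]

lemma getD_finRange_map {V : Type*} {k : ℕ} (f : Fin k → V) (j : ℕ) (t : V) :
    ((List.finRange k).map f).getD j t = if h : j < k then f ⟨j, h⟩ else t := by
  split
  · rw [List.getD_eq_getElem] <;> simp [*]
  · rw [List.getD_eq_default]; simp; omega

lemma routeLen_drop {V : Type*} [PseudoMetricSpace V] (t : V) (l : List V) (i : ℕ) :
    routeLen t (l.drop i) =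
      ∑ j ∈ Finset.range (l.length - i),
        dist (l.getD (i + j) t) (l.getD (i + j + 1) t) := by
  simp [routeLen, getD_drop', add_assoc]

lemma sum_range_id_real (m : ℕ) :
    ∑ i ∈ Finset.range m, (i : ℝ) = (m : ℝ) * ((m : ℝ) - 1) / 2 := by
  induction m with
  | zero => simp
  | succ k ih => rw [Finset.sum_range_succ, ih]; push_cast; ring

/-- in the instance where `d(u,t) = d(u,v) = 0` for players
`u,v ∈ {1,…,n-m}`, `d(u,t) = 1` and `d(u,v) = ε` for distinct `u,v ∈ {n-m+1,…,n}`, and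
cross distances equal `1`, the outcome `σ*` placing players `n-m+1,…,n` all on one bus and
the rest on another has `U(σ*) = m + (m(m-1)/2)·ε`, while the outcome `σ` placing each of
players `n-m+1,…,n` on a distinct bus (with the first `n-m` players each paying `2`) has
`U(σ) = m + 2(n-m) = 2n - m`; and the ratio `(2n-m)/(m + (m(m-1)/2)ε)` tends to
`2n/m - 1` as `ε → 0⁺`. -/
theorem stmt13 {V : Type*} [PseudoMetricSpace V] {n m : ℕ} (hm : 1 ≤ m) (hmn : m ≤ n)
    (ε : ℝ) (hε : 0 < ε) (x : Fin n → V) (t : V)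
    (hsmallt : ∀ u : Fin n, (u : ℕ) < n - m → dist (x u) t = 0)
    (hsmall : ∀ u v : Fin n, (u : ℕ) < n - m → (v : ℕ) < n - m → dist (x u) (x v) = 0)
    (hbigt : ∀ u : Fin n, n - m ≤ (u : ℕ) → dist (x u) t = 1)
    (hbig : ∀ u v : Fin n, n - m ≤ (u : ℕ) → n - m ≤ (v : ℕ) → u ≠ v →
      dist (x u) (x v) = ε)
    (hcross : ∀ u v : Fin n, (u : ℕ) < n - m → n - m ≤ (v : ℕ) → dist (x u) (x v) = 1) :
    -- the route of the bus carrying the first `n-m` players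
    let smalls : List V :=
      (List.finRange (n - m)).map (fun j : Fin (n - m) => x (Fin.castLE (Nat.sub_le n m) j))
    -- the route of the bus of `σ*` carrying the last `m` players
    let bigs : List V :=
      (List.finRange m).map (fun j : Fin m => x ⟨n - m + (j : ℕ), by have := j.isLt; omega⟩)
    -- U(σ*) = m + (m(m-1)/2)·ε
    ((∑ i ∈ Finset.range (n - m), routeLen t (smalls.drop i)) +
        (∑ i ∈ Finset.range m, routeLen t (bigs.drop i)) =
      (m : ℝ) + ((m : ℝ) * ((m : ℝ) - 1) / 2) * ε) ∧
    -- U(σ) = 2n - m, where the first `n-m` players share a bus also visiting player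
    -- `n-m+1` last, and each remaining player of `{n-m+2,…,n}` rides alone
    ((∑ i ∈ Finset.range ((smalls ++ [x ⟨n - m, by omega⟩]).length),
          routeLen t ((smalls ++ [x ⟨n - m, by omega⟩]).drop i)) +
        (∑ j : Fin m, if (j : ℕ) = 0 then 0 else
          routeLen t [x ⟨n - m + (j : ℕ), by have := j.isLt; omega⟩]) =
      2 * (n : ℝ) - (m : ℝ)) ∧
    Filter.Tendsto
      (fun e : ℝ => (2 * (n : ℝ) - (m : ℝ)) / ((m : ℝ) + ((m : ℝ) * ((m : ℝ) - 1) / 2) * e))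
      (nhdsWithin 0 (Set.Ioi 0)) (nhds (2 * (n : ℝ) / (m : ℝ) - 1)) := by
  intro smalls bigs
  have hnm : n - m ≤ n := Nat.sub_le n m
  -- generic zero-distance fact for "small" points and `t`
  have hzero : ∀ a b : V,
      (a = t ∨ ∃ u : Fin n, (u : ℕ) < n - m ∧ a = x u) →
      (b = t ∨ ∃ u : Fin n, (u : ℕ) < n - m ∧ b = x u) → dist a b = 0 := by
    rintro a b (rfl | ⟨u, hu, rfl⟩) (rfl | ⟨v, hv, rfl⟩)
    · simp
    · rw [dist_comm]; exact hsmallt v hv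
    · exact hsmallt u hu
    · exact hsmall u v hu hv
  -- getD facts
  have hsget : ∀ a : ℕ,
      smalls.getD a t = t ∨ ∃ u : Fin n, (u : ℕ) < n - m ∧ smalls.getD a t = x u := by
    intro a
    show ((List.finRange (n - m)).map _).getD a t = t ∨ _
    rw [getD_finRange_map]
    split
    · exact Or.inr ⟨_, by simpa using ‹a < n - m›, rfl⟩
    · exact Or.inl rfl
  have hsget2 : ∀ a : ℕ, (ha : a < n - m) →
      smalls.getD a t = x (Fin.castLE (Nat.sub_le n m) ⟨a, ha⟩) := by
    intro a ha
    show ((List.finRange (n - m)).map _).getD a t = _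
    rw [getD_finRange_map, dif_pos ha]
  have hbget : ∀ a : ℕ,
      bigs.getD a t = if h : a < m then
        x ⟨n - m + a, by omega⟩ else t := by
    intro a
    show ((List.finRange m).map _).getD a t = _
    rw [getD_finRange_map]
  have hslen : smalls.length = n - m := by
    show ((List.finRange (n - m)).map _).length = _
    simp
  have hblen : bigs.length = m := by
    show ((List.finRange m).map _).length = _
    simp
  refine ⟨?_, ?_, ?_⟩
  · -- U(σ*)
    have h1 : ∑ i ∈ Finset.range (n - m), routeLen t (smalls.drop i) = 0 := by
      apply Finset.sum_eq_zero
      intro i _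
      rw [routeLen_drop]
      apply Finset.sum_eq_zero
      intro j _
      exact hzero _ _ (hsget _) (hsget _)
    have h2 : ∀ i, i < m → routeLen t (bigs.drop i) = ((m - i - 1 : ℕ) : ℝ) * ε + 1 := by
      intro i hi
      rw [routeLen_drop, hblen]
      have hmi : m - i = (m - i - 1) + 1 := by omega
      rw [hmi, Finset.sum_range_succ]
      have hlast : dist (bigs.getD (i + (m - i - 1)) t) (bigs.getD (i + (m - i - 1) + 1) t)
          = 1 := by
        rw [hbget, hbget, dif_pos (by omega : i + (m - i - 1) < m), dif_neg (by omega)]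
        exact hbigt _ (by simp)
      rw [hlast]
      have hrest : ∀ j ∈ Finset.range (m - i - 1),
          dist (bigs.getD (i + j) t) (bigs.getD (i + j + 1) t) = ε := by
        intro j hj
        rw [Finset.mem_range] at hj
        rw [hbget, hbget, dif_pos (by omega : i + j < m), dif_pos (by omega : i + j + 1 < m)]
        refine hbig _ _ (by simp) (by simp) ?_
        simp only [ne_eq, Fin.mk.injEq]
        omega
      rw [Finset.sum_congr rfl hrest, Finset.sum_const, Finset.card_range, nsmul_eq_mul]
      norm_num
    have h3 : ∑ i ∈ Finset.range m, routeLen t (bigs.drop i) =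
        (m : ℝ) + ((m : ℝ) * ((m : ℝ) - 1) / 2) * ε := by
      rw [Finset.sum_congr rfl (fun i hi => h2 i (Finset.mem_range.mp hi))]
      rw [Finset.sum_add_distrib, Finset.sum_const, Finset.card_range]
      have he : ∑ i ∈ Finset.range m, ((m - i - 1 : ℕ) : ℝ) * ε =
          (∑ i ∈ Finset.range m, ((m - 1 - i : ℕ) : ℝ)) * ε := by
        rw [Finset.sum_mul]
        refine Finset.sum_congr rfl fun i _ => ?_
        congr 2
        omega
      rw [he, Finset.sum_range_reflect (fun i => ((i : ℕ) : ℝ)) m, sum_range_id_real]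
      push_cast
      ring
    rw [h1, h3, zero_add]
  · -- U(σ)
    set c : V := x ⟨n - m, by omega⟩ with hcdef
    have hct : dist c t = 1 := hbigt _ (by simp)
    have hLlen : (smalls ++ [c]).length = n - m + 1 := by simp [hslen]
    have hLget : ∀ a : ℕ, (smalls ++ [c]).getD a t =
        if a < n - m then smalls.getD a t else if a = n - m then c else t := by
      intro a
      rcases lt_trichotomy a (n - m) with h | h | h
      · rw [if_pos h, List.getD_append _ _ _ _ (by rw [hslen]; exact h)]
      · rw [if_neg (by omega), if_pos h,
          List.getD_append_right _ _ _ _ (by rw [hslen]; omega), hslen, h, Nat.sub_self]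
        rfl
      · rw [if_neg (by omega), if_neg (by omega), List.getD_eq_default]
        rw [hLlen]; omega
    have hsc : ∀ a : ℕ, a < n - m → dist (smalls.getD a t) c = 1 := by
      intro a ha
      rw [hsget2 a ha]
      exact hcross _ _ (by simpa using ha) (by simp)
    have hdrop2 : ∀ i, i < n - m → routeLen t ((smalls ++ [c]).drop i) = 2 := by
      intro i hi
      rw [routeLen_drop, hLlen]
      have hsplit : n - m + 1 - i = (n - m - i - 1) + 1 + 1 := by omega
      rw [hsplit, Finset.sum_range_succ, Finset.sum_range_succ]
      have e1 : i + (n - m - i - 1 + 1) = n - m := by omega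
      have hlast : dist ((smalls ++ [c]).getD (i + (n - m - i - 1 + 1)) t)
          ((smalls ++ [c]).getD (i + (n - m - i - 1 + 1) + 1) t) = 1 := by
        rw [e1, hLget, hLget, if_neg (lt_irrefl _), if_pos rfl, if_neg (by omega),
          if_neg (by omega)]
        exact hct
      have hpen : dist ((smalls ++ [c]).getD (i + (n - m - i - 1)) t)
          ((smalls ++ [c]).getD (i + (n - m - i - 1) + 1) t) = 1 := by
        rw [hLget, hLget, if_pos (by omega), if_neg (by omega), if_pos (by omega)]
        exact hsc _ (by omega)
      have hrest : ∀ j ∈ Finset.range (n - m - i - 1),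
          dist ((smalls ++ [c]).getD (i + j) t) ((smalls ++ [c]).getD (i + j + 1) t) = 0 := by
        intro j hj
        rw [Finset.mem_range] at hj
        rw [hLget, hLget, if_pos (by omega), if_pos (by omega)]
        exact hzero _ _ (hsget _) (hsget _)
      rw [hlast, hpen, Finset.sum_eq_zero hrest]
      norm_num
    have hdroplast : routeLen t ((smalls ++ [c]).drop (n - m)) = 1 := by
      rw [routeLen_drop, hLlen]
      have h1 : n - m + 1 - (n - m) = 1 := by omega
      rw [h1, Finset.sum_range_one, Nat.add_zero, hLget, hLget, if_neg (lt_irrefl _),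
        if_pos rfl, if_neg (by omega), if_neg (by omega)]
      exact hct
    have hsum1 : ∑ i ∈ Finset.range ((smalls ++ [c]).length),
        routeLen t ((smalls ++ [c]).drop i) = 2 * ((n - m : ℕ) : ℝ) + 1 := by
      rw [hLlen, Finset.sum_range_succ, hdroplast,
        Finset.sum_congr rfl (fun i hi => hdrop2 i (Finset.mem_range.mp hi)),
        Finset.sum_const, Finset.card_range, nsmul_eq_mul]
      ring
    have hsingle : ∀ j : Fin m, (j : ℕ) ≠ 0 →
        routeLen t [x ⟨n - m + (j : ℕ), by have := j.isLt; omega⟩] = 1 := by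
      intro j hj
      have : routeLen t [x ⟨n - m + (j : ℕ), by have := j.isLt; omega⟩] =
          dist (x ⟨n - m + (j : ℕ), by have := j.isLt; omega⟩) t := by
        simp [routeLen]
      rw [this]
      exact hbigt _ (by simp)
    have hsum2 : (∑ j : Fin m, if (j : ℕ) = 0 then (0 : ℝ) else
        routeLen t [x ⟨n - m + (j : ℕ), by have := j.isLt; omega⟩]) = ((m - 1 : ℕ) : ℝ) := by
      have step : ∀ j : Fin m, (if (j : ℕ) = 0 then (0 : ℝ) else
          routeLen t [x ⟨n - m + (j : ℕ), by have := j.isLt; omega⟩]) =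
          (if (j : ℕ) = 0 then (0 : ℝ) else 1) := by
        intro j
        split
        · rfl
        · exact hsingle j ‹_›
      rw [Finset.sum_congr rfl fun j _ => step j,
        Fin.sum_univ_eq_sum_range (fun j => if j = 0 then (0 : ℝ) else 1) m,
        ← Finset.add_sum_erase _ _ (Finset.mem_range.mpr (by omega : 0 < m)),
        if_pos rfl, zero_add,
        Finset.sum_congr rfl (fun j hj => if_neg (Finset.ne_of_mem_erase hj)),
        Finset.sum_const, Finset.card_erase_of_mem (Finset.mem_range.mpr (by omega : 0 < m)),
        Finset.card_range, nsmul_eq_mul, mul_one]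
    rw [hsum1, hsum2, Nat.cast_sub hmn, Nat.cast_sub hm]
    push_cast
    ring
  · -- limit
    have hm0 : (m : ℝ) ≠ 0 := by
      have : (0 : ℝ) < m := by exact_mod_cast hm
      linarith
    have hca : ContinuousAt
        (fun e : ℝ => (2 * (n : ℝ) - (m : ℝ)) /
          ((m : ℝ) + ((m : ℝ) * ((m : ℝ) - 1) / 2) * e)) 0 := by
      apply ContinuousAt.div continuousAt_const (by fun_prop)
      simp [hm0]
    have h3 := hca.continuousWithinAt (s := Set.Ioi (0 : ℝ))
    unfold ContinuousWithinAt at h3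
    convert h3 using 2
    field_simp
    ring
end
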